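/- Let f(y) = e^{-2y}(1 + 2y^2 + 2y√(1+y^2)) for y ≥ 0. Then f(0) = 1 and f'(y) < 0 for all y > 0; consequently f(y) ≤ 1 for all y ≥ 0. -/

import Mathlib

/-- f(y) = e^{-2y}(1 + 2y² + 2y√(1+y²)) satisfies f(0) = 1,
f'(y) < 0 for y > 0, and consequently f(y) ≤ 1 for y ≥ 0. -/
theorem stmt0 (f : ℝ → ℝ)
    (hf : ∀ y : ℝ, f y = Real.exp (-2 * y) * (1 + 2 * y ^ 2 + 2 * y * Real.sqrt (1 + y ^ 2))) :
    f 0 = 1 ∧ (∀ y : ℝ, 0 < y → deriv f y < 0) ∧ ∀ y : ℝ, 0 ≤ y → f y ≤ 1 := by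
  have hfe : f = fun y => Real.exp (-2 * y) * (1 + 2 * y ^ 2 + 2 * y * Real.sqrt (1 + y ^ 2)) :=
    funext hf
  have h0 : f 0 = 1 := by rw [hf]; simp
  have hderiv : ∀ y : ℝ, 0 < y → deriv f y < 0 := by
    intro y hy
    set s := Real.sqrt (1 + y ^ 2) with hs
    have hspos : (0 : ℝ) < 1 + y ^ 2 := by positivity
    have hs2 : s ^ 2 = 1 + y ^ 2 := Real.sq_sqrt hspos.le
    have hs1 : 1 ≤ s := by
      nlinarith [Real.sqrt_nonneg (1 + y ^ 2), hs2]
    have hsp : (0 : ℝ) < s := lt_of_lt_of_le one_pos hs1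
    have h1 : HasDerivAt (fun y : ℝ => 1 + y ^ 2) (2 * y) y := by
      simpa using ((hasDerivAt_pow 2 y).const_add 1)
    have h2 : HasDerivAt (fun y : ℝ => Real.sqrt (1 + y ^ 2)) (2 * y / (2 * s)) y :=
      h1.sqrt hspos.ne'
    have ha : HasDerivAt (fun y : ℝ => 1 + 2 * y ^ 2) (2 * (2 * y)) y := by
      simpa using ((hasDerivAt_pow 2 y).const_mul 2).const_add 1
    have hc : HasDerivAt (fun y : ℝ => 2 * y) 2 y := by
      simpa using (hasDerivAt_id y).const_mul 2
    have hb : HasDerivAt (fun y : ℝ => 2 * y * Real.sqrt (1 + y ^ 2))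
        (2 * s + 2 * y * (2 * y / (2 * s))) y := by
      have := hc.mul h2
      exact this
    have h3 : HasDerivAt (fun y : ℝ => 1 + 2 * y ^ 2 + 2 * y * Real.sqrt (1 + y ^ 2))
        (2 * (2 * y) + (2 * s + 2 * y * (2 * y / (2 * s)))) y := ha.add hb
    have h4 : HasDerivAt (fun y : ℝ => Real.exp (-2 * y)) (Real.exp (-2 * y) * (-2)) y := by
      have hlin : HasDerivAt (fun y : ℝ => -2 * y) (-2) y := by
        simpa using (hasDerivAt_id y).const_mul (-2)
      exact hlin.exp
    have h5 : HasDerivAt f (Real.exp (-2 * y) * (-2) * (1 + 2 * y ^ 2 + 2 * y * s)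
        + Real.exp (-2 * y) * (2 * (2 * y) + (2 * s + 2 * y * (2 * y / (2 * s))))) y := by
      rw [hfe]
      exact h4.mul h3
    rw [h5.deriv]
    have hexp : 0 < Real.exp (-2 * y) := Real.exp_pos _
    have hq : 2 * y * (2 * y / (2 * s)) = 2 * y ^ 2 / s := by
      field_simp
    have key : (-2) * (1 + 2 * y ^ 2 + 2 * y * s)
        + (2 * (2 * y) + (2 * s + 2 * y ^ 2 / s)) < 0 := by
      rw [← sub_neg, ]
      have hdiv : 2 * y ^ 2 / s * s = 2 * y ^ 2 := div_mul_cancel₀ _ hsp.ne'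
      nlinarith [mul_pos hy (mul_pos hy hy), mul_nonneg (sub_nonneg.mpr hs1)
        (by nlinarith : (0:ℝ) ≤ 2 * y ^ 2 - 2 * y + 1), hsp, hdiv]
    calc Real.exp (-2 * y) * (-2) * (1 + 2 * y ^ 2 + 2 * y * s)
        + Real.exp (-2 * y) * (2 * (2 * y) + (2 * s + 2 * y * (2 * y / (2 * s))))
        = Real.exp (-2 * y) * ((-2) * (1 + 2 * y ^ 2 + 2 * y * s)
            + (2 * (2 * y) + (2 * s + 2 * y ^ 2 / s))) := by rw [hq]; ring
      _ < 0 := mul_neg_of_pos_of_neg hexp key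
  refine ⟨h0, hderiv, ?_⟩
  have hcont : ContinuousOn f (Set.Ici 0) := by
    rw [hfe]
    apply Continuous.continuousOn
    continuity
  have hanti : StrictAntiOn f (Set.Ici 0) := by
    apply strictAntiOn_of_deriv_neg (convex_Ici 0) hcont
    intro x hx
    rw [interior_Ici] at hx
    exact hderiv x hx
  intro y hy
  rcases eq_or_lt_of_le hy with h | h
  · rw [← h, h0]
  · have := hanti (Set.mem_Ici.mpr le_rfl) (Set.mem_Ici.mpr hy) h
    rw [h0] at this
    exact this.le
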